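/- arXiv:2404.06123 — 3 statements merged into one kernel-verified Lean document; each statement's English description precedes it below -/
import Mathlib

section
/- Let (Λ, ⪯) be a finite poset of forest type and Θ ⊆ Λ a stable subset. Define m*(Λ,Θ) ⊆ Λ \ Θ as in the definition: j ∈ m*(Λ,Θ) iff j ∈ Λ \ Θ and either there is no j' ∈ Λ \ Θ with j ≺ j', or there exists i ∈ Θ with j ≺ i and no j' ∈ Λ \ Θ with j ≺ j' ≺ i. Then for every j ∈ Θ, there exists k ∈ m*(Λ,Θ) with k ⪯ j. -/
/-- Lemma m-star-2: In a finite poset of forest type with a stable subset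
`Θ`, every `j ∈ Θ` lies above some element of `m*(Λ,Θ)`. -/
theorem stmt6 {Λ : Type*} [PartialOrder Λ] [Fintype Λ]
    (hforest : ∀ j i₁ i₂ : Λ, i₁ ≤ j → i₂ ≤ j → i₁ ≤ i₂ ∨ i₂ ≤ i₁)
    (Θ : Set Λ)
    (hstable1 : ∀ i ∈ Θ, ∃ j : Λ, j < i)
    (hstable2 : ∀ i ∈ Θ, ∀ j : Λ, i ≤ j → j ∈ Θ)
    (j : Λ) (hj : j ∈ Θ) :
    ∃ k : Λ, k ≤ j ∧ k ∉ Θ ∧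
      ((¬ ∃ j' : Λ, j' ∉ Θ ∧ k < j') ∨
        (∃ i ∈ Θ, k < i ∧ ¬ ∃ j' : Λ, j' ∉ Θ ∧ k < j' ∧ j' < i)) := by
  classical
  set S : Finset Λ := Finset.univ.filter (fun k => k ≤ j ∧ k ∉ Θ) with hS
  have hSmem : ∀ x : Λ, x ∈ S ↔ x ≤ j ∧ x ∉ Θ := by
    intro x; simp [hS]
  have hSne : S.Nonempty := by
    obtain ⟨m, hmT, hmin⟩ := Finset.exists_minimal
      (s := Finset.univ.filter (fun k : Λ => k ≤ j)) ⟨j, by simp⟩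
    simp only [Finset.mem_filter, Finset.mem_univ, true_and] at hmT hmin
    refine ⟨m, (hSmem m).2 ⟨hmT, ?_⟩⟩
    intro hmΘ
    obtain ⟨x, hx⟩ := hstable1 m hmΘ
    exact lt_irrefl _ (lt_of_lt_of_le hx (hmin (le_trans hx.le hmT) hx.le))
  obtain ⟨k, hkS, hkmax⟩ := Finset.exists_maximal hSne
  obtain ⟨hkj, hkΘ⟩ := (hSmem k).1 hkS
  have hklt : k < j := lt_of_le_of_ne hkj (by rintro rfl; exact hkΘ hj)
  refine ⟨k, hkj, hkΘ, Or.inr ⟨j, hj, hklt, ?_⟩⟩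
  rintro ⟨j', hj'Θ, hkj', hj'j⟩
  exact lt_irrefl _ (lt_of_lt_of_le hkj' (hkmax ((hSmem j').2 ⟨hj'j.le, hj'Θ⟩) hkj'.le))
end

section
/- Let (Λ, ⪯) be a finite poset of forest type, Θ ⊆ Λ a stable subset, and j ∈ Θ. Let R = {i ∈ Λ \ Θ | i ⪯ j}. Then R is totally ordered by ⪯, and its maximum element belongs to m*(Λ,Θ). -/
/-- For a finite poset of forest type, a stable subset `Θ` and `j ∈ Θ`, the
set `R = {i ∈ Λ \ Θ | i ⪯ j}` is totally ordered and its maximum belongs to `m*(Λ,Θ)`. -/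
theorem stmt12 {Λ : Type*} [PartialOrder Λ] [Fintype Λ]
    (hforest : ∀ j i₁ i₂ : Λ, i₁ ≤ j → i₂ ≤ j → i₁ ≤ i₂ ∨ i₂ ≤ i₁)
    (Θ : Set Λ)
    (hstable1 : ∀ i ∈ Θ, ∃ j : Λ, j < i)
    (hstable2 : ∀ i ∈ Θ, ∀ j : Λ, i ≤ j → j ∈ Θ)
    (j : Λ) (hj : j ∈ Θ) :
    (∀ i₁ ∈ {i : Λ | i ∉ Θ ∧ i ≤ j}, ∀ i₂ ∈ {i : Λ | i ∉ Θ ∧ i ≤ j},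
        i₁ ≤ i₂ ∨ i₂ ≤ i₁) ∧
    ∃ k ∈ {i : Λ | i ∉ Θ ∧ i ≤ j},
      (∀ i ∈ {i : Λ | i ∉ Θ ∧ i ≤ j}, i ≤ k) ∧
      (k ∉ Θ ∧
        ((¬ ∃ j' : Λ, j' ∉ Θ ∧ k < j') ∨
          (∃ i ∈ Θ, k < i ∧ ¬ ∃ j' : Λ, j' ∉ Θ ∧ k < j' ∧ j' < i))) := by
  classical
  have hchain : ∀ i₁ ∈ {i : Λ | i ∉ Θ ∧ i ≤ j}, ∀ i₂ ∈ {i : Λ | i ∉ Θ ∧ i ≤ j},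
      i₁ ≤ i₂ ∨ i₂ ≤ i₁ := fun i₁ h₁ i₂ h₂ => hforest j i₁ i₂ h₁.2 h₂.2
  refine ⟨hchain, ?_⟩
  -- R is nonempty: a minimal element of {i | i ≤ j} is not in Θ
  obtain ⟨m, hm, hmmin⟩ :=
    (Finset.univ.filter (· ≤ j)).exists_minimal ⟨j, by simp⟩
  simp only [Finset.mem_filter, Finset.mem_univ, true_and] at hm
  have hmΘ : m ∉ Θ := by
    intro hmem
    obtain ⟨j', hj'⟩ := hstable1 m hmem
    exact absurd (hmmin (by simp [le_trans hj'.le hm]) hj'.le) (not_le_of_gt hj')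
  -- take a maximal element of R
  obtain ⟨k, hk, hkmax⟩ :=
    (Finset.univ.filter (fun i => i ∉ Θ ∧ i ≤ j)).exists_maximal
      ⟨m, by simp [hmΘ, hm]⟩
  simp only [Finset.mem_filter, Finset.mem_univ, true_and] at hk
  have hmax : ∀ i ∈ {i : Λ | i ∉ Θ ∧ i ≤ j}, i ≤ k := by
    intro i hi
    rcases hchain i hi k hk with h | h
    · exact h
    · rcases eq_or_lt_of_le h with h' | h'
      · exact h'.ge
      · exact absurd (hkmax (by simp [hi.1, hi.2]) h'.le) (not_le_of_gt h')
  have hkj : k < j := lt_of_le_of_ne hk.2 (fun h => hk.1 (h ▸ hj))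
  refine ⟨k, hk, hmax, hk.1, Or.inr ⟨j, hj, hkj, ?_⟩⟩
  rintro ⟨j', hj'Θ, hkj', hj'j⟩
  exact absurd (hmax j' ⟨hj'Θ, hj'j.le⟩) (not_le_of_gt hkj')
end

section
/- Let X be a smooth (or real analytic) manifold, Y a smooth manifold, f : X → Y smooth, and L ⊆ Y × Y an embedded submanifold containing the diagonal Δ_Y, locally cut out near a point p ∈ Δ_Y by functions φ_1,...,φ_m with linearly independent differentials, each dφ_i(p) conormal to Δ_Y. Then with f₂ = id_Y × f : Y × X → Y × Y and q ∈ Δ_f (the graph of f, embedded as {(f(x),x)}) with f₂(q) = p, the pullbacks φ_i ∘ f₂ have linearly independent differentials at q, so f₂^{-1}(L) is a submanifold of Y × X near q. -/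
/-- Let `f : X → Y` be differentiable at `x₀`, `y₀ = f x₀`,
`p = (y₀, y₀)`, `q = (y₀, x₀)`, and let `φ i : Y × Y → ℝ` be differentiable at `p` with
linearly independent differentials, each conormal to the diagonal (vanishing on tangent
vectors `(v, v)`). Then the pullbacks `φ i ∘ f₂`, with `f₂ (y, x) = (y, f x)`, have
linearly independent differentials at `q`. -/
theorem stmt16 {X Y : Type*}
    [NormedAddCommGroup X] [NormedSpace ℝ X]
    [NormedAddCommGroup Y] [NormedSpace ℝ Y]
    (f : X → Y) (x₀ : X) (hf : DifferentiableAt ℝ f x₀)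
    {m : ℕ} (φ : Fin m → (Y × Y → ℝ))
    (hφdiff : ∀ i, DifferentiableAt ℝ (φ i) (f x₀, f x₀))
    (hindep : LinearIndependent ℝ (fun i => fderiv ℝ (φ i) (f x₀, f x₀)))
    (hconormal : ∀ i, ∀ v : Y, fderiv ℝ (φ i) (f x₀, f x₀) (v, v) = 0) :
    LinearIndependent ℝ
      (fun i => fderiv ℝ ((φ i) ∘ (fun p : Y × X => (p.1, f p.2))) (f x₀, x₀)) := by

  have hF : HasFDerivAt (fun p : Y × X => (p.1, f p.2))
      ((ContinuousLinearMap.fst ℝ Y X).prod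
        ((fderiv ℝ f x₀).comp (ContinuousLinearMap.snd ℝ Y X))) (f x₀, x₀) :=
    HasFDerivAt.prodMk hasFDerivAt_fst (hf.hasFDerivAt.comp _ hasFDerivAt_snd)
  have hfd : ∀ i, fderiv ℝ ((φ i) ∘ (fun p : Y × X => (p.1, f p.2))) (f x₀, x₀)
      = (fderiv ℝ (φ i) (f x₀, f x₀)).comp
          ((ContinuousLinearMap.fst ℝ Y X).prod
            ((fderiv ℝ f x₀).comp (ContinuousLinearMap.snd ℝ Y X))) := fun i =>
    ((hφdiff i).hasFDerivAt.comp (f x₀, x₀) hF).fderiv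
  rw [Fintype.linearIndependent_iff] at hindep ⊢
  intro c hc
  apply hindep c
  refine ContinuousLinearMap.ext fun vw => ?_
  obtain ⟨v, w⟩ := vw
  have h2 := congrArg (fun L : (Y × X) →L[ℝ] ℝ => L (v - w, 0)) hc
  simp only [ContinuousLinearMap.coe_sum', Finset.sum_apply, ContinuousLinearMap.smul_apply,
    hfd, ContinuousLinearMap.comp_apply, ContinuousLinearMap.prod_apply,
    ContinuousLinearMap.coe_fst', ContinuousLinearMap.coe_snd', map_zero,
    ContinuousLinearMap.zero_apply] at h2
  have key : ∀ i, fderiv ℝ (φ i) (f x₀, f x₀) (v, w)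
      = fderiv ℝ (φ i) (f x₀, f x₀) (v - w, 0) := by
    intro i
    have hvw : (v, w) = (v - w, (0:Y)) + (w, w) := by simp [Prod.ext_iff]
    rw [hvw, map_add, hconormal i w, add_zero]
  simp only [ContinuousLinearMap.coe_sum', Finset.sum_apply, ContinuousLinearMap.smul_apply,
    ContinuousLinearMap.zero_apply, key]
  exact h2
end
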